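/- arXiv:1602.07220 — 4 statements merged into one kernel-verified Lean document; each statement's English description precedes it below -/
import Mathlib

section
/- In a triangle with edge lengths d1, d2, d3, if d1, d2 ≥ 2κ (where κ = cos(π/5)) and d3 ≥ 2.1, and the triangle is nonobtuse, then its area exceeds a_crit = (3/2)·sin(π/5)·κ·(1+κ). -/
open Real

/-- Heron's formula for the area of a triangle with side lengths `a`, `b`, `c`. -/
noncomputable def heronArea (a b c : ℝ) : ℝ :=
  Real.sqrt ((a + b + c) / 2 * ((a + b + c) / 2 - a) * ((a + b + c) / 2 - b)
    * ((a + b + c) / 2 - c))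

lemma key_poly_ineq (r x y z : ℝ) (hr : r^2 = 5) (hr2 : 2.236 ≤ r) (_hr3 : r ≤ 2.2361)
    (hx : (3+r)/2 ≤ x) (hy : (3+r)/2 ≤ y) (hz : 4.41 ≤ z)
    (h1 : z ≤ x+y) (h2 : y ≤ x+z) (h3 : x ≤ y+z) :
    225 + 90*r < 64*x*y - 16*(x+y-z)^2 := by
  nlinarith [mul_nonneg (by nlinarith : (0:ℝ) ≤ x+y-z) (by nlinarith : (0:ℝ) ≤ z - 4.41),
    mul_nonneg (by nlinarith : (0:ℝ) ≤ 2*x-(x+y-z)) (by nlinarith : (0:ℝ) ≤ 2*y-(x+y-z)),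
    mul_nonneg (by nlinarith : (0:ℝ) ≤ x-(3+r)/2) (by nlinarith : (0:ℝ) ≤ y-(3+r)/2),
    sq_nonneg (x-y), sq_nonneg (x+y-z-4.41), mul_nonneg (by nlinarith : (0:ℝ) ≤ x+y-z) (by nlinarith : (0:ℝ) ≤ x+y-z)]

theorem long_edge_not_subcritical (d1 d2 d3 : ℝ)
    (h1 : 2 * Real.cos (π / 5) ≤ d1) (h2 : 2 * Real.cos (π / 5) ≤ d2)
    (h3 : (2.1 : ℝ) ≤ d3)
    (htri1 : d3 < d1 + d2) (htri2 : d2 < d1 + d3) (htri3 : d1 < d2 + d3)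
    (hnonobtuse1 : d3 ^ 2 ≤ d1 ^ 2 + d2 ^ 2)
    (hnonobtuse2 : d2 ^ 2 ≤ d1 ^ 2 + d3 ^ 2)
    (hnonobtuse3 : d1 ^ 2 ≤ d2 ^ 2 + d3 ^ 2) :
    heronArea d1 d2 d3 >
      (3 / 2) * Real.sin (π / 5) * Real.cos (π / 5) * (1 + Real.cos (π / 5)) := by
  set r := Real.sqrt 5 with hrdef
  have hr0 : (0:ℝ) ≤ r := Real.sqrt_nonneg 5
  have hr : r ^ 2 = 5 := Real.sq_sqrt (by norm_num)
  have hr2 : (2.236:ℝ) ≤ r := by nlinarith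
  have hr3 : r ≤ (2.2361:ℝ) := by nlinarith
  have hcos : Real.cos (π / 5) = (1 + r) / 4 := Real.cos_pi_div_five
  have hsinpos : 0 < Real.sin (π / 5) :=
    Real.sin_pos_of_pos_of_lt_pi (by positivity) (by linarith [Real.pi_pos])
  have hsinsq : Real.sin (π / 5) ^ 2 = (5 - r) / 8 := by
    have := Real.sin_sq_add_cos_sq (π / 5)
    rw [hcos] at this
    linear_combination this - (1/16 : ℝ) * hr
  -- the critical area value
  set a : ℝ := (3 / 2) * Real.sin (π / 5) * Real.cos (π / 5) * (1 + Real.cos (π / 5)) with hadef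
  have ha0 : 0 ≤ a := by
    rw [hadef, hcos]
    positivity
  have ha2 : a ^ 2 = (225 + 90 * r) / 256 := by
    rw [hadef, hcos]
    have h8 : Real.sin (π / 5) ^ 2 = (5 - r) / 8 := hsinsq
    linear_combination (9*(5+6*r+r^2)^2/1024) * h8 + ((1215 + 81*r - 63*r^2 - 9*r^3)/8192) * hr
  -- side length lower bounds
  have hd1 : (1 + r) / 2 ≤ d1 := by rw [hcos] at h1; linarith
  have hd2 : (1 + r) / 2 ≤ d2 := by rw [hcos] at h2; linarith
  have hd1p : 0 < d1 := by linarith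
  have hd2p : 0 < d2 := by linarith
  have hrsq : ((1 + r) / 2) ^ 2 = (3 + r) / 2 := by linear_combination hr / 4
  have hx : (3 + r) / 2 ≤ d1 ^ 2 := by
    rw [← hrsq]; exact pow_le_pow_left₀ (by positivity) hd1 2
  have hy : (3 + r) / 2 ≤ d2 ^ 2 := by
    rw [← hrsq]; exact pow_le_pow_left₀ (by positivity) hd2 2
  have hz : (4.41:ℝ) ≤ d3 ^ 2 := by
    have : ((2.1:ℝ)) ^ 2 ≤ d3 ^ 2 := pow_le_pow_left₀ (by norm_num) h3 2
    norm_num at this; linarith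
  have hkey := key_poly_ineq r (d1^2) (d2^2) (d3^2) hr hr2 hr3 hx hy hz
    hnonobtuse1 hnonobtuse2 hnonobtuse3
  -- Heron product exceeds a^2
  have hP : a ^ 2 < (d1 + d2 + d3) / 2 * ((d1 + d2 + d3) / 2 - d1) * ((d1 + d2 + d3) / 2 - d2)
      * ((d1 + d2 + d3) / 2 - d3) := by
    have hident : (d1 + d2 + d3) / 2 * ((d1 + d2 + d3) / 2 - d1) * ((d1 + d2 + d3) / 2 - d2)
        * ((d1 + d2 + d3) / 2 - d3)
        = (64*(d1^2)*(d2^2) - 16*(d1^2+d2^2-d3^2)^2) / 256 := by ring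
    rw [ha2, hident]
    linarith [hkey]
  unfold heronArea
  calc a = Real.sqrt (a ^ 2) := (Real.sqrt_sq ha0).symm
    _ < _ := Real.sqrt_lt_sqrt (sq_nonneg a) hP
end

section
/- For a nonobtuse triangle, the area is a monotonically nondecreasing function of each edge length: if two nonobtuse triangles have edge lengths (a,b,c) and (a',b',c') with a ≤ a', b ≤ b', c ≤ c', then the area of the first is at most the area of the second. -/
open Real

lemma heron_key (x y z x' y' z' : ℝ) (h1 : x ≤ y + z) (h2 : y ≤ x + z) (h3 : z ≤ x + y)
    (h1' : x' ≤ y' + z') (h2' : y' ≤ x' + z') (h3' : z' ≤ x' + y')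
    (hx : x ≤ x') (hy : y ≤ y') (hz : z ≤ z') :
    2*x*y + 2*y*z + 2*z*x - x^2 - y^2 - z^2 ≤
      2*x'*y' + 2*y'*z' + 2*z'*x' - x'^2 - y'^2 - z'^2 := by
  nlinarith [mul_nonneg (sub_nonneg.2 hx) (sub_nonneg.2 (h1.trans (add_le_add hy hz))),
    mul_nonneg (sub_nonneg.2 hy) (sub_nonneg.2 (h2.trans (add_le_add hx hz))),
    mul_nonneg (sub_nonneg.2 hz) (sub_nonneg.2 (h3.trans (add_le_add hx hy))),
    mul_nonneg (sub_nonneg.2 hx) (sub_nonneg.2 h1'),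
    mul_nonneg (sub_nonneg.2 hy) (sub_nonneg.2 h2'),
    mul_nonneg (sub_nonneg.2 hz) (sub_nonneg.2 h3'),
    mul_nonneg (sub_nonneg.2 hx) (sub_nonneg.2 h1),
    mul_nonneg (sub_nonneg.2 hy) (sub_nonneg.2 h2),
    mul_nonneg (sub_nonneg.2 hz) (sub_nonneg.2 h3)]

theorem heronArea_mono_of_nonobtuse (a b c a' b' c' : ℝ)
    (hpos : 0 < a ∧ 0 < b ∧ 0 < c)
    (htri : c < a + b ∧ b < a + c ∧ a < b + c)
    (htri' : c' < a' + b' ∧ b' < a' + c' ∧ a' < b' + c')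
    (hnonobtuse : c ^ 2 ≤ a ^ 2 + b ^ 2 ∧ b ^ 2 ≤ a ^ 2 + c ^ 2 ∧
      a ^ 2 ≤ b ^ 2 + c ^ 2)
    (hnonobtuse' : c' ^ 2 ≤ a' ^ 2 + b' ^ 2 ∧ b' ^ 2 ≤ a' ^ 2 + c' ^ 2 ∧
      a' ^ 2 ≤ b' ^ 2 + c' ^ 2)
    (ha : a ≤ a') (hb : b ≤ b') (hc : c ≤ c') :
    heronArea a b c ≤ heronArea a' b' c' := by
  obtain ⟨ha0, hb0, hc0⟩ := hpos
  have ha2 : a ^ 2 ≤ a' ^ 2 := by nlinarith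
  have hb2 : b ^ 2 ≤ b' ^ 2 := by nlinarith
  have hc2 : c ^ 2 ≤ c' ^ 2 := by nlinarith
  have key := heron_key (a^2) (b^2) (c^2) (a'^2) (b'^2) (c'^2)
    (by linarith [hnonobtuse.2.2]) (by linarith [hnonobtuse.2.1]) (by linarith [hnonobtuse.1])
    (by linarith [hnonobtuse'.2.2]) (by linarith [hnonobtuse'.2.1]) (by linarith [hnonobtuse'.1])
    ha2 hb2 hc2
  apply Real.sqrt_le_sqrt
  nlinarith [key]
end

section
/- Let κ = cos(π/5). Then area(1.8, 1.8, 2κ) > a_crit + 0.008, where area(d1,d2,d3) is the area of a triangle with the given edge lengths and a_crit = (3/2)·sin(π/5)·κ·(1+κ). -/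
open Real

theorem area_1_8_1_8_2kappa :
    heronArea 1.8 1.8 (2 * Real.cos (π / 5)) >
      (3 / 2) * Real.sin (π / 5) * Real.cos (π / 5) * (1 + Real.cos (π / 5))
        + 0.008 := by
  have h5l : (2.2360679 : ℝ) < Real.sqrt 5 := by
    rw [show (2.2360679 : ℝ) = Real.sqrt (2.2360679 ^ 2) by
      rw [Real.sqrt_sq]; norm_num]
    exact Real.sqrt_lt_sqrt (by positivity) (by norm_num)
  have h5u : Real.sqrt 5 < 2.2360680 := by
    rw [show (2.2360680 : ℝ) = Real.sqrt (2.2360680 ^ 2) by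
      rw [Real.sqrt_sq]; norm_num]
    exact Real.sqrt_lt_sqrt (by norm_num) (by norm_num)
  have hc : Real.cos (π / 5) = (1 + Real.sqrt 5) / 4 := Real.cos_pi_div_five
  set C := Real.cos (π / 5) with hCdef
  set S := Real.sin (π / 5) with hSdef
  have hcl : (0.80901697 : ℝ) < C := by rw [hc]; linarith
  have hcu : C < (0.80901700 : ℝ) := by rw [hc]; linarith
  have hS2 : S ^ 2 = 1 - C ^ 2 := by
    rw [hSdef, hCdef, Real.sin_sq]
  have hSpos : 0 < S := Real.sin_pos_of_pos_of_lt_pi (by positivity)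
    (by nlinarith [Real.pi_pos])
  have hsl : (0.58778523 : ℝ) < S := by nlinarith
  have hsu : S < (0.58778530 : ℝ) := by nlinarith
  rw [heronArea, gt_iff_lt, show (1.8 : ℝ) + 1.8 + 2 * C = 3.6 + 2 * C by ring]
  rw [lt_sqrt (by nlinarith)]
  have h1 : (3.6 + 2*C)/2*((3.6 + 2*C)/2 - 1.8)*((3.6 + 2*C)/2 - 1.8)*((3.6 + 2*C)/2 - 2*C)
      = (3.24 - C^2)*C^2 := by ring
  have h2 : (3.24 - C^2)*C^2 > 1.692 := by nlinarith [sq_nonneg (C - 0.80901698), sq_nonneg (C^2 - 0.6545085), mul_pos (show (0:ℝ) < C by linarith) (show (0:ℝ) < C by linarith)]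
  have h3 : 3/2*S*C*(1+C) + 0.008 < 1.2990 := by nlinarith [mul_pos hSpos (by linarith : (0:ℝ) < C), mul_lt_mul_of_pos_right hsu (by linarith : (0:ℝ) < C), sq_nonneg (S - 0.5877853), sq_nonneg (C - 0.809017)]
  have h4 : (0:ℝ) < 3/2*S*C*(1+C) + 0.008 := by positivity
  nlinarith [h1, h2, h3, h4]
end

section
/- Let κ = cos(π/5). The area of a triangle with circumradius 2 and two edges of length 2κ each, with the third edge as long as possible, exceeds 0.968. -/
open Real

/-- A triangle inscribed in a circle of radius 2 with two edges of length `2κ`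
and the third edge as long as possible: each edge of length `2κ` subtends a
central angle `2 arcsin(κ/2)`, and the longest possible third edge has length
`2·2·sin(2·arcsin(κ/2))`.  The area of this triangle exceeds `0.968`. -/
theorem areaEta_bound :
    let κ : ℝ := Real.cos (π / 5)
    let θ : ℝ := 2 * Real.arcsin (κ / 2)
    heronArea (2 * κ) (2 * κ) (4 * Real.sin θ) > 0.968 := by
  intro κ θ
  have hκ : κ = (1 + Real.sqrt 5) / 4 := Real.cos_pi_div_five
  have h5u : Real.sqrt 5 < 2.2361 := by
    rw [show (2.2361 : ℝ) = Real.sqrt (2.2361 ^ 2) from (Real.sqrt_sq (by norm_num)).symm]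
    exact Real.sqrt_lt_sqrt (by norm_num) (by norm_num)
  have h5l : (2.236 : ℝ) < Real.sqrt 5 := by
    rw [show (2.236 : ℝ) = Real.sqrt (2.236 ^ 2) from (Real.sqrt_sq (by norm_num)).symm]
    exact Real.sqrt_lt_sqrt (by norm_num) (by norm_num)
  have hκ1 : 0.809 < κ := by rw [hκ]; linarith
  have hκ2 : κ < 0.8091 := by rw [hκ]; linarith
  have hsin : Real.sin θ = 2 * (κ / 2) * Real.sqrt (1 - (κ / 2) ^ 2) := by
    show Real.sin (2 * Real.arcsin (κ / 2)) = _
    rw [Real.sin_two_mul, Real.sin_arcsin (by linarith) (by linarith),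
      Real.cos_arcsin]
  set t := Real.sqrt (1 - (κ / 2) ^ 2) with ht
  have ht2 : t ^ 2 = 1 - (κ / 2) ^ 2 := Real.sq_sqrt (by nlinarith)
  rw [hsin]
  unfold heronArea
  have harg : (2 * κ + 2 * κ + 4 * (2 * (κ / 2) * t)) / 2 *
      ((2 * κ + 2 * κ + 4 * (2 * (κ / 2) * t)) / 2 - 2 * κ) *
      ((2 * κ + 2 * κ + 4 * (2 * (κ / 2) * t)) / 2 - 2 * κ) *
      ((2 * κ + 2 * κ + 4 * (2 * (κ / 2) * t)) / 2 - 4 * (2 * (κ / 2) * t)) =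
      κ ^ 6 * (4 - κ ^ 2) := by
    linear_combination (16 * κ ^ 4 * (1 - t ^ 2 - (1 - (κ / 2) ^ 2))) * ht2
  rw [harg]
  rw [gt_iff_lt, Real.lt_sqrt (by norm_num)]
  have hu1 : (0.654481 : ℝ) < κ ^ 2 := by nlinarith
  have hu2 : κ ^ 2 < 0.6547 := by nlinarith
  have h6 : (0.654481 : ℝ) ^ 3 < (κ ^ 2) ^ 3 :=
    pow_lt_pow_left₀ hu1 (by norm_num) (by norm_num)
  have h6' : (0.28034 : ℝ) < κ ^ 6 := by
    have he : (κ ^ 2) ^ 3 = κ ^ 6 := by ring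
    rw [he] at h6; norm_num at h6; linarith
  have h4 : (3.3453 : ℝ) < 4 - κ ^ 2 := by linarith
  nlinarith [h6', h4, mul_pos (show (0:ℝ) < κ ^ 6 by linarith) (show (0:ℝ) < 4 - κ ^ 2 by linarith)]
end
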